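/- For any finite pattern P ⊂ ℤ², the fill closure φ(P) is a disjoint union of translated discrete triangles: there exist r ≥ 0, positive integers k₁,…,k_r, and vectors v₁,…,v_r ∈ ℤ² such that φ(P) = ⋃ᵢ (vᵢ + T_{kᵢ}), the sets vᵢ + T_{kᵢ} are pairwise non-touching (no point of one is in the neighbourhood of another), and Σᵢ kᵢ ≤ |P|. -/

import Mathlib

open Set Relation

/-- Points of the plane lattice. -/
abbrev Pt : Type := ℤ × ℤ

/-- The triangle shape `T = {(0,1),(1,1),(1,0)}`. -/
def Tshape : Set Pt := {(0, 1), (1, 1), (1, 0)}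

/-- Translate of a set of points by a vector. -/
def transl (v : Pt) (S : Set Pt) : Set Pt := (fun p => v + p) '' S

/-- Translate of a finite set of points by a vector. -/
def transF (v : Pt) (S : Finset Pt) : Finset Pt := S.image (fun p => v + p)

/-- A set is filled if every translate of `T` containing at least two of its
points is contained in it. -/
def Filled (F : Set Pt) : Prop :=
  ∀ v : Pt, 2 ≤ (F ∩ transl v Tshape).ncard → transl v Tshape ⊆ F

/-- The fill closure `φ(P)`: smallest filled superset of `P`. -/
def fill (P : Set Pt) : Set Pt := ⋂₀ {F | P ⊆ F ∧ Filled F}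

/-- A single triangle solitaire move: if a translate `v + T` contains exactly two
points of `P`, replace one of them by the third point of `v + T`. -/
def Move (P Q : Finset Pt) : Prop :=
  ∃ v x y : Pt, x ∈ Tshape ∧ y ∈ Tshape ∧ x ≠ y ∧
    v + x ∈ P ∧ v + y ∉ P ∧
    ((P : Set Pt) ∩ transl v Tshape).ncard = 2 ∧
    (Q : Set Pt) = insert (v + y) ((P : Set Pt) \ {v + x})

/-- `Q` is in the solitaire orbit of `P`. -/
def InOrbit (P Q : Finset Pt) : Prop := Relation.ReflTransGen Move P Q

/-- The discrete triangle `T_n = {(a,b) ∈ {0,…,n−1}² : a + b ≥ n − 1}`. -/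
def triangle (n : ℕ) : Set Pt :=
  {p | 0 ≤ p.1 ∧ p.1 < (n : ℤ) ∧ 0 ≤ p.2 ∧ p.2 < (n : ℤ) ∧ (n : ℤ) - 1 ≤ p.1 + p.2}

/-- Neighbourhood of a point: the other points sharing a translate of `T` with it. -/
def nbr (x : Pt) : Set Pt :=
  {y | y ≠ x ∧ ∃ v : Pt, x ∈ transl v Tshape ∧ y ∈ transl v Tshape}

/-- Neighbourhood of a set. -/
def nbrSet (A : Set Pt) : Set Pt := ⋃ a ∈ A, nbr a

/-- Two sets touch if one meets the neighbourhood of the other. -/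
def Touch (A B : Set Pt) : Prop := (A ∩ nbrSet B).Nonempty ∨ (B ∩ nbrSet A).Nonempty

/-- `(r, k, v)` is a decomposition of `φ(P)` into pairwise non-touching
translated triangles `vᵢ + T_{kᵢ}`. -/
def IsDecomp (P : Finset Pt) (r : ℕ) (k : Fin r → ℕ) (v : Fin r → Pt) : Prop :=
  (fill (P : Set Pt) = ⋃ i, transl (v i) (triangle (k i))) ∧
  (∀ i, 1 ≤ k i) ∧
  (∀ i j, i ≠ j → ¬ Touch (transl (v i) (triangle (k i))) (transl (v j) (triangle (k j))))

/-- The horizontal line `L_n = {(a, n−1) : 0 ≤ a ≤ n−1}` (top edge of `T_n`). -/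
def lineF (n : ℕ) : Finset Pt :=
  (Finset.range n).image (fun a : ℕ => (((a : ℤ), (n : ℤ) - 1) : Pt))

/-- The vertical edge `{(n−1, b) : 0 ≤ b ≤ n−1}` of `T_n`. -/
def vlineF (n : ℕ) : Finset Pt :=
  (Finset.range n).image (fun b : ℕ => ((((n : ℤ) - 1), (b : ℤ)) : Pt))

/-- The diagonal edge `{(a, n−1−a) : 0 ≤ a ≤ n−1}` of `T_n`. -/
def dlineF (n : ℕ) : Finset Pt :=
  (Finset.range n).image (fun a : ℕ => (((a : ℤ), (n : ℤ) - 1 - (a : ℤ)) : Pt))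

/-- The points of `T_n` below the top line, listed row `n−2` down to row `0`,
each row from right to left. -/
def belowPts (n : ℕ) : List Pt :=
  (List.range (n - 1)).flatMap (fun i =>
    (List.range (n - 1 - i)).map (fun t =>
      (((n : ℤ) - 1 - (t : ℤ), (n : ℤ) - 2 - (i : ℤ)) : Pt)))

/-- The canonical pattern `P_{n,k}`: the line `L_n` together with the first `k`
points of `T_n \ L_n` in the order: row `n−2` right to left, then row `n−3`, etc. -/
def PnkF (n k : ℕ) : Finset Pt := lineF n ∪ ((belowPts n).take k).toFinset

/-- A TEP family on the triangle shape, with cells ordered `(0,1), (1,1), (1,0)`: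
any two of the three symbols determine the third uniquely. -/
def IsTEP {A : Type} (R : Set (A × A × A)) : Prop :=
  (∀ a b : A, ∃! c : A, (a, b, c) ∈ R) ∧
  (∀ a c : A, ∃! b : A, (a, b, c) ∈ R) ∧
  (∀ b c : A, ∃! a : A, (a, b, c) ∈ R)

/-- A colouring is valid on `T_n` if every translate of `T` inside `T_n`
carries a pattern of `R`. -/
def ValidOn {A : Type} (R : Set (A × A × A)) (n : ℕ) (x : Pt → A) : Prop :=
  ∀ v : Pt, transl v Tshape ⊆ triangle n →
    (x (v + (0, 1)), x (v + (1, 1)), x (v + (1, 0))) ∈ R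

/-- One completion step: a translate of `T` inside `T_n` has exactly two
coloured cells; colour the third using the TEP rule `R`. States are pairs
(set of coloured cells, colouring). -/
def TStep {A : Type} (R : Set (A × A × A)) (n : ℕ)
    (s t : Set Pt × (Pt → A)) : Prop :=
  ∃ v : Pt, transl v Tshape ⊆ triangle n ∧
    ∃ c ∈ transl v Tshape, c ∉ s.1 ∧ transl v Tshape \ {c} ⊆ s.1 ∧
      t.1 = insert c s.1 ∧ (∀ p : Pt, p ≠ c → t.2 p = s.2 p) ∧
      (t.2 (v + (0, 1)), t.2 (v + (1, 1)), t.2 (v + (1, 0))) ∈ R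

/-- `P ⊆ T_n` is a basis: for every colouring of `P`, every maximal run of the
iterative completion process covers `T_n` and produces a valid pattern. -/
def IsBasis {A : Type} (R : Set (A × A × A)) (n : ℕ) (P : Finset Pt) : Prop :=
  (P : Set Pt) ⊆ triangle n ∧
  ∀ q : Pt → A, ∀ s : Set Pt × (Pt → A),
    Relation.ReflTransGen (TStep R n) ((P : Set Pt), q) s →
    (∀ t, ¬ TStep R n s t) →
    triangle n ⊆ s.1 ∧ ValidOn R n s.2


/-! ### Auxiliary development -/

section Aux

/-- Triangles in support-function form: `x ≤ a`, `y ≤ b`, `x + y ≥ c`. -/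
def tri (a b c : ℤ) : Set Pt := {p | p.1 ≤ a ∧ p.2 ≤ b ∧ c ≤ p.1 + p.2}

lemma mem_tri {a b c : ℤ} {p : Pt} : p ∈ tri a b c ↔ p.1 ≤ a ∧ p.2 ≤ b ∧ c ≤ p.1 + p.2 :=
  Iff.rfl

lemma transl_Tshape (v : Pt) :
    transl v Tshape = {v + (0,1), v + (1,1), v + (1,0)} := by
  simp [transl, Tshape, Set.image_insert_eq]

lemma Tshape_finite (v : Pt) : (transl v Tshape).Finite := by
  rw [transl_Tshape]
  exact (Set.finite_singleton _).insert _ |>.insert _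

/-- Basic fill facts -/
lemma subset_fill (P : Set Pt) : P ⊆ fill P := by
  intro x hx
  intro F hF
  exact hF.1 hx

lemma fill_subset {P F : Set Pt} (h1 : P ⊆ F) (h2 : Filled F) : fill P ⊆ F := by
  intro x hx
  exact hx F ⟨h1, h2⟩

lemma filled_fill (P : Set Pt) : Filled (fill P) := by
  intro v hv
  intro x hx F hF
  have hsub : fill P ∩ transl v Tshape ⊆ F ∩ transl v Tshape := by
    intro y hy
    exact ⟨fill_subset hF.1 hF.2 hy.1, hy.2⟩
  have : 2 ≤ (F ∩ transl v Tshape).ncard :=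
    le_trans hv (Set.ncard_le_ncard hsub ((Tshape_finite v).inter_of_right _))
  exact hF.2 v this hx

lemma fill_mono {P Q : Set Pt} (h : P ⊆ Q) : fill P ⊆ fill Q := by
  intro x hx F hF
  exact hx F ⟨h.trans hF.1, hF.2⟩

lemma fill_eq_self {F : Set Pt} (h : Filled F) : fill F = F :=
  le_antisymm (fill_subset le_rfl h) (subset_fill F)

lemma fill_union_fill_right (S T : Set Pt) : fill (S ∪ fill T) = fill (S ∪ T) := by
  apply le_antisymm
  · apply fill_subset _ (filled_fill _)
    apply Set.union_subset
    · exact (Set.subset_union_left).trans (subset_fill _)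
    · exact fill_mono Set.subset_union_right
  · exact fill_mono (Set.union_subset_union_right _ (subset_fill T))

/-- membership step within a filled set -/
lemma filled_two {F : Set Pt} (hF : Filled F) {v x y : Pt} (hx : x ∈ F) (hy : y ∈ F)
    (hxv : x ∈ transl v Tshape) (hyv : y ∈ transl v Tshape) (hxy : x ≠ y) :
    transl v Tshape ⊆ F := by
  apply hF v
  show 1 < _
  rw [Set.one_lt_ncard_iff (((Tshape_finite v)).inter_of_right _)]
  exact ⟨x, y, ⟨hx, hxv⟩, ⟨hy, hyv⟩, hxy⟩

lemma cellA (v : Pt) : v + (0,1) ∈ transl v Tshape := by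
  rw [transl_Tshape]; simp

lemma cellB (v : Pt) : v + (1,1) ∈ transl v Tshape := by
  rw [transl_Tshape]; simp

lemma cellC (v : Pt) : v + (1,0) ∈ transl v Tshape := by
  rw [transl_Tshape]; simp

lemma pt_ext {x y : ℤ} {p : Pt} (h1 : p.1 = x) (h2 : p.2 = y) : p = (x, y) := by
  cases p; simp_all

/-- step: from (x, y+1) and (x+1, y+1) get (x+1, y). -/
lemma stepAB {F : Set Pt} (hF : Filled F) {x y : ℤ}
    (h1 : ((x, y+1) : Pt) ∈ F) (h2 : ((x+1, y+1) : Pt) ∈ F) : ((x+1, y) : Pt) ∈ F := by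
  have e1 : ((x, y+1) : Pt) = (x,y) + (0,1) := by simp [Prod.ext_iff]
  have e2 : ((x+1, y+1) : Pt) = (x,y) + (1,1) := by simp [Prod.ext_iff]
  have e3 : ((x+1, y) : Pt) = (x,y) + (1,0) := by simp [Prod.ext_iff]
  have := filled_two hF h1 h2 (e1 ▸ cellA (x,y)) (e2 ▸ cellB (x,y))
    (by simp [Prod.ext_iff])
  exact this (e3 ▸ cellC (x,y))

/-- step: from (x, y+1) and (x+1, y) get (x+1, y+1). -/
lemma stepAC {F : Set Pt} (hF : Filled F) {x y : ℤ}
    (h1 : ((x, y+1) : Pt) ∈ F) (h2 : ((x+1, y) : Pt) ∈ F) : ((x+1, y+1) : Pt) ∈ F := by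
  have e1 : ((x, y+1) : Pt) = (x,y) + (0,1) := by simp [Prod.ext_iff]
  have e2 : ((x+1, y+1) : Pt) = (x,y) + (1,1) := by simp [Prod.ext_iff]
  have e3 : ((x+1, y) : Pt) = (x,y) + (1,0) := by simp [Prod.ext_iff]
  have := filled_two hF h1 h2 (e1 ▸ cellA (x,y)) (e3 ▸ cellC (x,y))
    (by simp [Prod.ext_iff])
  exact this (e2 ▸ cellB (x,y))

/-- step: from (x+1, y+1) and (x+1, y) get (x, y+1). -/
lemma stepBC {F : Set Pt} (hF : Filled F) {x y : ℤ}
    (h1 : ((x+1, y+1) : Pt) ∈ F) (h2 : ((x+1, y) : Pt) ∈ F) : ((x, y+1) : Pt) ∈ F := by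
  have e1 : ((x, y+1) : Pt) = (x,y) + (0,1) := by simp [Prod.ext_iff]
  have e2 : ((x+1, y+1) : Pt) = (x,y) + (1,1) := by simp [Prod.ext_iff]
  have e3 : ((x+1, y) : Pt) = (x,y) + (1,0) := by simp [Prod.ext_iff]
  have := filled_two hF h1 h2 (e2 ▸ cellB (x,y)) (e3 ▸ cellC (x,y))
    (by simp [Prod.ext_iff])
  exact this (e1 ▸ cellA (x,y))

/-- `tri` sets are filled. -/
lemma filled_tri (a b c : ℤ) : Filled (tri a b c) := by
  intro v hv
  have hv' : 1 < (tri a b c ∩ transl v Tshape).ncard := hv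
  rw [Set.one_lt_ncard_iff (((Tshape_finite v)).inter_of_right _)] at hv'
  obtain ⟨x, y, ⟨hxF, hxv⟩, ⟨hyF, hyv⟩, hxy⟩ := hv'
  rw [transl_Tshape] at hxv hyv ⊢
  obtain ⟨v1, v2⟩ := v
  simp only [Set.mem_insert_iff, Set.mem_singleton_iff, Prod.mk_add_mk] at hxv hyv
  intro q hq
  simp only [Set.mem_insert_iff, Set.mem_singleton_iff, Prod.mk_add_mk] at hq
  obtain ⟨x1, x2⟩ := x; obtain ⟨y1, y2⟩ := y
  simp only [mem_tri] at hxF hyF ⊢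
  obtain ⟨q1, q2⟩ := q
  simp only [Prod.mk.injEq] at hxv hyv hq hxy
  rcases hq with ⟨e1,e2⟩|⟨e1,e2⟩|⟨e1,e2⟩ <;> subst e1 <;> subst e2 <;>
    rcases hxv with ⟨e1,e2⟩|⟨e1,e2⟩|⟨e1,e2⟩ <;> subst e1 <;> subst e2 <;>
    rcases hyv with ⟨f1,f2⟩|⟨f1,f2⟩|⟨f1,f2⟩ <;> subst f1 <;> subst f2 <;>
    simp only at hxF hyF ⊢ <;> first | omega | exact absurd rfl hxy


lemma mem_transl {v q : Pt} {S : Set Pt} : q ∈ transl v S ↔ ((q.1 - v.1, q.2 - v.2) : Pt) ∈ S := by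
  constructor
  · rintro ⟨p, hp, rfl⟩
    simpa using hp
  · intro h
    exact ⟨_, h, by simp [Prod.ext_iff]⟩

/-- Characterization of the neighbourhood by six offsets. -/
lemma mem_nbr_iff {x y : Pt} : y ∈ nbr x ↔
    ((y.1 = x.1 + 1 ∧ y.2 = x.2) ∨ (y.1 = x.1 ∧ y.2 = x.2 + 1) ∨
     (y.1 = x.1 - 1 ∧ y.2 = x.2) ∨ (y.1 = x.1 ∧ y.2 = x.2 - 1) ∨
     (y.1 = x.1 + 1 ∧ y.2 = x.2 - 1) ∨ (y.1 = x.1 - 1 ∧ y.2 = x.2 + 1)) := by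
  constructor
  · rintro ⟨hne, v, hx, hy⟩
    rw [transl_Tshape] at hx hy
    have hne' : ¬ (y.1 = x.1 ∧ y.2 = x.2) := by
      intro h
      exact hne (pt_ext h.1 h.2)
    simp only [Set.mem_insert_iff, Set.mem_singleton_iff, Prod.ext_iff] at hx hy
    obtain ⟨v1, v2⟩ := v
    simp only [Prod.fst_add, Prod.snd_add] at hx hy
    rcases hx with ⟨e1,e2⟩|⟨e1,e2⟩|⟨e1,e2⟩ <;> rcases hy with ⟨f1,f2⟩|⟨f1,f2⟩|⟨f1,f2⟩ <;> omega
  · intro h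
    have hne : y ≠ x := by
      intro h'; subst h'
      rcases h with ⟨e1,e2⟩|⟨e1,e2⟩|⟨e1,e2⟩|⟨e1,e2⟩|⟨e1,e2⟩|⟨e1,e2⟩ <;> omega
    refine ⟨hne, ?_⟩
    have tac : ∀ (w : Pt), x ∈ transl w Tshape → y ∈ transl w Tshape → ∃ v, x ∈ transl v Tshape ∧ y ∈ transl v Tshape := fun w h1 h2 => ⟨w, h1, h2⟩
    have mem3 : ∀ (w z : Pt), (z = w + (0,1) ∨ z = w + (1,1) ∨ z = w + (1,0)) → z ∈ transl w Tshape := by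
      intro w z hz
      rw [transl_Tshape]
      simpa using hz
    rcases h with ⟨e1,e2⟩|⟨e1,e2⟩|⟨e1,e2⟩|⟨e1,e2⟩|⟨e1,e2⟩|⟨e1,e2⟩
    · exact tac (x.1, x.2 - 1) (mem3 _ _ (by left; simp [Prod.ext_iff] <;> omega))
        (mem3 _ _ (by right; left; simp [Prod.ext_iff] <;> omega))
    · exact tac (x.1 - 1, x.2) (mem3 _ _ (by right; right; simp [Prod.ext_iff] <;> omega))
        (mem3 _ _ (by right; left; simp [Prod.ext_iff] <;> omega))
    · exact tac (x.1 - 1, x.2 - 1) (mem3 _ _ (by right; left; simp [Prod.ext_iff] <;> omega))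
        (mem3 _ _ (by left; simp [Prod.ext_iff] <;> omega))
    · exact tac (x.1 - 1, x.2 - 1) (mem3 _ _ (by right; left; simp [Prod.ext_iff] <;> omega))
        (mem3 _ _ (by right; right; simp [Prod.ext_iff] <;> omega))
    · exact tac (x.1, x.2 - 1) (mem3 _ _ (by left; simp [Prod.ext_iff] <;> omega))
        (mem3 _ _ (by right; right; simp [Prod.ext_iff] <;> omega))
    · exact tac (x.1 - 1, x.2) (mem3 _ _ (by right; right; simp [Prod.ext_iff] <;> omega))
        (mem3 _ _ (by left; simp [Prod.ext_iff] <;> omega))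

lemma nbr_symm {x y : Pt} (h : y ∈ nbr x) : x ∈ nbr y := by
  obtain ⟨hne, v, hx, hy⟩ := h
  exact ⟨Ne.symm hne, v, hy, hx⟩

lemma touch_iff {A B : Set Pt} : Touch A B ↔ ∃ p q, p ∈ A ∧ q ∈ B ∧ q ∈ nbr p := by
  constructor
  · rintro (⟨x, hxA, hx⟩ | ⟨x, hxB, hx⟩)
    · simp only [nbrSet, Set.mem_iUnion] at hx
      obtain ⟨q, hqB, hq⟩ := hx
      exact ⟨x, q, hxA, hqB, nbr_symm hq⟩
    · simp only [nbrSet, Set.mem_iUnion] at hx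
      obtain ⟨p, hpA, hp⟩ := hx
      exact ⟨p, x, hpA, hxB, hp⟩
  · rintro ⟨p, q, hpA, hqB, hq⟩
    left
    refine ⟨p, hpA, ?_⟩
    simp only [nbrSet, Set.mem_iUnion]
    exact ⟨q, hqB, nbr_symm hq⟩

lemma touch_comm {A B : Set Pt} (h : Touch A B) : Touch B A := by
  rcases h with h | h
  · exact Or.inr h
  · exact Or.inl h

/-- Two distinct points of a common `T`-translate are neighbours. -/
lemma nbr_of_translate {v x y : Pt} (hx : x ∈ transl v Tshape) (hy : y ∈ transl v Tshape)
    (hne : y ≠ x) : y ∈ nbr x := ⟨hne, v, hx, hy⟩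

/-- A union of pairwise non-touching filled sets is filled. -/
lemma filled_sUnion {𝒮 : Set (Set Pt)} (h1 : ∀ S ∈ 𝒮, Filled S)
    (h2 : ∀ S ∈ 𝒮, ∀ T ∈ 𝒮, S ≠ T → ¬ Touch S T) : Filled (⋃₀ 𝒮) := by
  intro v hv
  have hv' : 1 < (⋃₀ 𝒮 ∩ transl v Tshape).ncard := hv
  rw [Set.one_lt_ncard_iff (((Tshape_finite v)).inter_of_right _)] at hv'
  obtain ⟨x, y, ⟨hxU, hxv⟩, ⟨hyU, hyv⟩, hxy⟩ := hv'
  obtain ⟨S, hS, hxS⟩ := hxU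
  obtain ⟨T, hT, hyT⟩ := hyU
  by_cases hST : S = T
  · subst hST
    intro q hq
    exact ⟨S, hS, filled_two (h1 S hS) hxS hyT hxv hyv hxy hq⟩
  · exfalso
    apply h2 S hS T hT hST
    rw [touch_iff]
    exact ⟨x, y, hxS, hyT, nbr_of_translate hxv hyv (Ne.symm hxy)⟩

/-- Translated discrete triangles in support form. -/
lemma transl_triangle_eq (v : Pt) (k : ℕ) (hk : 1 ≤ k) :
    transl v (triangle k) = tri (v.1 + k - 1) (v.2 + k - 1) (v.1 + v.2 + k - 1) := by
  ext q
  rw [mem_transl]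
  simp only [triangle, tri, Set.mem_setOf_eq]
  have : (1 : ℤ) ≤ (k : ℤ) := by exact_mod_cast hk
  constructor
  · rintro ⟨h1, h2, h3, h4, h5⟩
    refine ⟨by omega, by omega, by omega⟩
  · rintro ⟨h1, h2, h3⟩
    refine ⟨by omega, by omega, by omega, by omega, by omega⟩

lemma tri_eq_transl {a b c : ℤ} (h : c ≤ a + b) :
    tri a b c = transl ((c - b, c - a) : Pt) (triangle ((a + b - c).toNat + 1)) := by
  rw [transl_triangle_eq _ _ (by omega)]
  have ht : (((a + b - c).toNat : ℤ)) = a + b - c := Int.toNat_of_nonneg (by omega)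
  ext p
  simp only [mem_tri]
  push_cast [ht]
  constructor <;> rintro ⟨h1, h2, h3⟩ <;> exact ⟨by omega, by omega, by omega⟩

lemma tri_subset_tri {a b c A B C : ℤ} (h : c ≤ a + b) :
    tri a b c ⊆ tri A B C ↔ (a ≤ A ∧ b ≤ B ∧ C ≤ c) := by
  constructor
  · intro hs
    have h1 := hs (show ((a, b) : Pt) ∈ tri a b c from ⟨le_rfl, le_rfl, h⟩)
    have h2 := hs (show ((a, c - a) : Pt) ∈ tri a b c from
      ⟨le_rfl, show c - a ≤ b by omega, show c ≤ a + (c - a) by omega⟩)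
    refine ⟨h1.1, h1.2.1, ?_⟩
    have h4 : C ≤ a + (c - a) := h2.2.2
    omega
  · rintro ⟨h1, h2, h3⟩ p hp
    simp only [mem_tri] at hp ⊢
    exact ⟨by omega, by omega, by omega⟩


lemma memF_congr {F : Set Pt} {p q : Pt} (h : p = q) (hp : p ∈ F) : q ∈ F := h ▸ hp

/-- Absorb a point on the right vertical side. -/
lemma caseX {F : Set Pt} (hF : Filled F) {a b c y0 : ℤ} (h : c ≤ a + b)
    (hsub : tri a b c ⊆ F) (hp : ((a + 1, y0) : Pt) ∈ F) (h1 : c - a - 1 ≤ y0) (h2 : y0 ≤ b) :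
    tri (a + 1) b c ⊆ F := by
  have up : ∀ y : ℤ, y0 ≤ y → y ≤ b → ((a + 1, y) : Pt) ∈ F := by
    refine Int.le_induction (fun _ => hp) ?_
    intro y hy ih hb
    have hprev : ((a + 1, y) : Pt) ∈ F := ih (by omega)
    have hleft : ((a, y + 1) : Pt) ∈ F := hsub ⟨le_rfl, show y + 1 ≤ b from hb,
      show c ≤ a + (y + 1) by omega⟩
    exact stepAC hF hleft hprev
  have down : ∀ y : ℤ, y ≤ y0 → c - a - 1 ≤ y → ((a + 1, y) : Pt) ∈ F := by
    refine Int.le_induction_down (fun _ => hp) ?_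
    intro y hy ih hge
    have hcur : ((a + 1, y) : Pt) ∈ F := ih (by omega)
    have hleft : ((a, y) : Pt) ∈ F := hsub ⟨le_rfl, show y ≤ b by omega,
      show c ≤ a + y by omega⟩
    have := stepAB hF (x := a) (y := y - 1)
      (memF_congr (by simp [Prod.ext_iff] <;> omega) hleft)
      (memF_congr (by simp [Prod.ext_iff] <;> omega) hcur)
    exact this
  intro q hq
  obtain ⟨hq1, hq2, hq3⟩ := hq
  rcases lt_or_ge q.1 (a + 1) with hx | hx
  · exact hsub ⟨by omega, hq2, hq3⟩
  · have hq1' : q.1 = a + 1 := by omega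
    rcases le_total y0 q.2 with hy | hy
    · exact memF_congr (pt_ext hq1' rfl).symm (up q.2 hy hq2)
    · exact memF_congr (pt_ext hq1' rfl).symm (down q.2 hy (by omega))

/-- Absorb a point on the top side. -/
lemma caseY {F : Set Pt} (hF : Filled F) {a b c x0 : ℤ} (h : c ≤ a + b)
    (hsub : tri a b c ⊆ F) (hp : ((x0, b + 1) : Pt) ∈ F) (h1 : c - b - 1 ≤ x0) (h2 : x0 ≤ a) :
    tri a (b + 1) c ⊆ F := by
  have up : ∀ x : ℤ, x0 ≤ x → x ≤ a → ((x, b + 1) : Pt) ∈ F := by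
    refine Int.le_induction (fun _ => hp) ?_
    intro x hx ih ha
    have hprev : ((x, b + 1) : Pt) ∈ F := ih (by omega)
    have hlow : ((x + 1, b) : Pt) ∈ F := hsub ⟨show x + 1 ≤ a from ha, le_rfl,
      show c ≤ x + 1 + b by omega⟩
    exact stepAC hF hprev hlow
  have down : ∀ x : ℤ, x ≤ x0 → c - b - 1 ≤ x → ((x, b + 1) : Pt) ∈ F := by
    refine Int.le_induction_down (fun _ => hp) ?_
    intro x hx ih hge
    have hcur : ((x, b + 1) : Pt) ∈ F := ih (by omega)
    have hlow : ((x, b) : Pt) ∈ F := hsub ⟨show x ≤ a by omega, le_rfl,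
      show c ≤ x + b by omega⟩
    have := stepBC hF (x := x - 1) (y := b)
      (memF_congr (by simp [Prod.ext_iff] <;> omega) hcur)
      (memF_congr (by simp [Prod.ext_iff] <;> omega) hlow)
    exact this
  intro q hq
  obtain ⟨hq1, hq2, hq3⟩ := hq
  rcases lt_or_ge q.2 (b + 1) with hy | hy
  · exact hsub ⟨hq1, by omega, hq3⟩
  · have hq2' : q.2 = b + 1 := by omega
    rcases le_total x0 q.1 with hx | hx
    · exact memF_congr (pt_ext rfl hq2').symm (up q.1 hx hq1)
    · exact memF_congr (pt_ext rfl hq2').symm (down q.1 hx (by omega))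

/-- Absorb a point on the diagonal side. -/
lemma caseD {F : Set Pt} (hF : Filled F) {a b c x0 : ℤ} (h : c ≤ a + b)
    (hsub : tri a b c ⊆ F) (hp : ((x0, c - 1 - x0) : Pt) ∈ F)
    (h1 : c - 1 - b ≤ x0) (h2 : x0 ≤ a) :
    tri a b (c - 1) ⊆ F := by
  have right : ∀ x : ℤ, x0 ≤ x → x ≤ a → ((x, c - 1 - x) : Pt) ∈ F := by
    refine Int.le_induction (fun _ => hp) ?_
    intro x hx ih ha
    have hprev : ((x, c - 1 - x) : Pt) ∈ F := ih (by omega)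
    have hin : ((x + 1, c - 1 - x) : Pt) ∈ F := hsub ⟨show x + 1 ≤ a from ha,
      show c - 1 - x ≤ b by omega, show c ≤ x + 1 + (c - 1 - x) by omega⟩
    have := stepAB hF (x := x) (y := c - 2 - x)
      (memF_congr (by simp [Prod.ext_iff] <;> omega) hprev)
      (memF_congr (by simp [Prod.ext_iff] <;> omega) hin)
    exact memF_congr (by simp [Prod.ext_iff] <;> omega) this
  have left : ∀ x : ℤ, x ≤ x0 → c - 1 - b ≤ x → ((x, c - 1 - x) : Pt) ∈ F := by
    refine Int.le_induction_down (fun _ => hp) ?_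
    intro x hx ih hge
    have hcur : ((x, c - 1 - x) : Pt) ∈ F := ih (by omega)
    have hin : ((x, c - x) : Pt) ∈ F := hsub ⟨show x ≤ a by omega,
      show c - x ≤ b by omega, show c ≤ x + (c - x) by omega⟩
    have := stepBC hF (x := x - 1) (y := c - 1 - x)
      (memF_congr (by simp [Prod.ext_iff] <;> omega) hin)
      (memF_congr (by simp [Prod.ext_iff] <;> omega) hcur)
    exact memF_congr (by simp [Prod.ext_iff] <;> omega) this
  intro q hq
  obtain ⟨hq1, hq2, hq3⟩ := hq
  rcases le_or_gt c (q.1 + q.2) with hs | hs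
  · exact hsub ⟨hq1, hq2, hs⟩
  · have hsum : q.2 = c - 1 - q.1 := by omega
    rcases le_total x0 q.1 with hx | hx
    · exact memF_congr (pt_ext rfl hsum).symm (right q.1 hx hq1)
    · exact memF_congr (pt_ext rfl hsum).symm (left q.1 hx (by omega))

/-- Classify a point touching a triangle from outside. -/
lemma touch_classify {a b c : ℤ} {t p : Pt} (ht : t ∈ tri a b c)
    (hp : p ∉ tri a b c) (hn : p ∈ nbr t) :
    (p.1 = a + 1 ∧ c - a - 1 ≤ p.2 ∧ p.2 ≤ b) ∨
    (p.2 = b + 1 ∧ c - b - 1 ≤ p.1 ∧ p.1 ≤ a) ∨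
    (p.1 + p.2 = c - 1 ∧ c - 1 - b ≤ p.1 ∧ p.1 ≤ a) := by
  rw [mem_nbr_iff] at hn
  simp only [mem_tri] at ht hp
  omega

/-- Growing a triangle inside a filled set by one touching point. -/
lemma grow {F : Set Pt} (hF : Filled F) {a b c : ℤ} (h : c ≤ a + b) (hsub : tri a b c ⊆ F)
    {p t : Pt} (hpF : p ∈ F) (hpt : p ∉ tri a b c) (htt : t ∈ tri a b c) (hn : p ∈ nbr t) :
    ∃ a' b' c', c' ≤ a' + b' ∧ tri a' b' c' ⊆ F ∧ tri a b c ⊆ tri a' b' c' ∧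
      p ∈ tri a' b' c' ∧ a' + b' - c' = a + b - c + 1 ∧
      a' ≤ max a p.1 ∧ b' ≤ max b p.2 ∧ min c (p.1 + p.2) ≤ c' := by
  rcases touch_classify htt hpt hn with ⟨e1, e2, e3⟩ | ⟨e1, e2, e3⟩ | ⟨e1, e2, e3⟩
  · refine ⟨a + 1, b, c, by omega, ?_, ?_, ?_, by omega,
      by rw [← e1]; exact le_max_right a p.1, le_max_left b p.2, min_le_left c _⟩
    · exact caseX hF h hsub (memF_congr (pt_ext e1 rfl) hpF) e2 e3
    · exact (tri_subset_tri h).2 ⟨by omega, le_rfl, le_rfl⟩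
    · exact ⟨by omega, by omega, by omega⟩
  · refine ⟨a, b + 1, c, by omega, ?_, ?_, ?_, by omega,
      le_max_left a p.1, by rw [← e1]; exact le_max_right b p.2, min_le_left c _⟩
    · exact caseY hF h hsub (memF_congr (pt_ext rfl e1) hpF) e2 e3
    · exact (tri_subset_tri h).2 ⟨le_rfl, by omega, le_rfl⟩
    · exact ⟨by omega, by omega, by omega⟩
  · refine ⟨a, b, c - 1, by omega, ?_, ?_, ?_, by omega,
      le_max_left a p.1, le_max_left b p.2, by rw [← e1]; exact min_le_right c _⟩
    · exact caseD hF h hsub (memF_congr (pt_ext rfl (by omega)) hpF) e2 e3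
    · exact (tri_subset_tri h).2 ⟨le_rfl, le_rfl, by omega⟩
    · exact ⟨by omega, by omega, by omega⟩


/-- Adjacency within a set. -/
def Adj (S : Set Pt) (x y : Pt) : Prop := x ∈ S ∧ y ∈ S ∧ y ∈ nbr x

lemma adj_symm {S : Set Pt} : Symmetric (Adj S) := by
  rintro x y ⟨h1, h2, h3⟩
  exact ⟨h2, h1, nbr_symm h3⟩

/-- Every point of a triangle is connected to the top-right corner. -/
lemma tri_connected {a b c : ℤ} (h : c ≤ a + b) :
    ∀ p ∈ tri a b c, ReflTransGen (Adj (tri a b c)) p ((a, b) : Pt) := by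
  have key : ∀ n : ℕ, ∀ p : Pt, p ∈ tri a b c → (a - p.1) + (b - p.2) ≤ (n : ℤ) →
      ReflTransGen (Adj (tri a b c)) p ((a, b) : Pt) := by
    intro n
    induction n with
    | zero =>
      intro p hp hn
      obtain ⟨h1, h2, h3⟩ := hp
      have : p = ((a, b) : Pt) := pt_ext (by omega) (by omega)
      rw [this]
    | succ n ih =>
      intro p hp hn
      obtain ⟨h1, h2, h3⟩ := hp
      by_cases hx : p.1 < a
      · have hq : ((p.1 + 1, p.2) : Pt) ∈ tri a b c := ⟨by omega, h2, by omega⟩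
        refine ReflTransGen.head
          (⟨⟨h1, h2, h3⟩, hq, ?_⟩ : Adj (tri a b c) p ((p.1 + 1, p.2) : Pt)) (ih _ hq ?_)
        · rw [mem_nbr_iff]; left; exact ⟨rfl, rfl⟩
        · push_cast at hn ⊢; omega
      · by_cases hy : p.2 < b
        · have hq : ((p.1, p.2 + 1) : Pt) ∈ tri a b c := ⟨h1, by omega, by omega⟩
          refine ReflTransGen.head
            (⟨⟨h1, h2, h3⟩, hq, ?_⟩ : Adj (tri a b c) p ((p.1, p.2 + 1) : Pt)) (ih _ hq ?_)
          · rw [mem_nbr_iff]; right; left; exact ⟨rfl, rfl⟩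
          · push_cast at hn ⊢; omega
        · have : p = ((a, b) : Pt) := pt_ext (by omega) (by omega)
          rw [this]
  intro p hp
  exact key ((a - p.1) + (b - p.2)).toNat p hp (by omega)

lemma exit_pair {r : Pt → Pt → Prop} {C : Set Pt} {x : Pt} (hx : x ∈ C) :
    ∀ {y}, ReflTransGen r x y → y ∉ C → ∃ u w, r u w ∧ u ∈ C ∧ w ∉ C := by
  intro y hpath
  induction hpath with
  | refl => intro hy; exact absurd hx hy
  | @tail b c hab hbc ih =>
    intro hy
    by_cases hb : b ∈ C
    · exact ⟨b, c, hbc, hb, hy⟩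
    · exact ih hb

/-- Size bound for the hull of two touching triangles. -/
lemma hull_bound {a1 b1 c1 a2 b2 c2 : ℤ} {t s : Pt}
    (ht : t ∈ tri a1 b1 c1) (hs : s ∈ tri a2 b2 c2) (hn : s ∈ nbr t) :
    max a1 a2 + max b1 b2 - min c1 c2 ≤ (a1 + b1 - c1) + (a2 + b2 - c2) + 1 := by
  rw [mem_nbr_iff] at hn
  obtain ⟨e1, e2, e3⟩ := ht
  obtain ⟨f1, f2, f3⟩ := hs
  rcases max_cases a1 a2 with ⟨g1, _⟩ | ⟨g1, _⟩ <;>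
    rcases max_cases b1 b2 with ⟨g2, _⟩ | ⟨g2, _⟩ <;>
    rcases min_cases c1 c2 with ⟨g3, _⟩ | ⟨g3, _⟩ <;>
    rw [g1, g2, g3] <;> omega

/-- Merging two touching triangles inside the fill. -/
lemma merge {a1 b1 c1 a2 b2 c2 : ℤ} (h1 : c1 ≤ a1 + b1) (h2 : c2 ≤ a2 + b2)
    (htouch : Touch (tri a1 b1 c1) (tri a2 b2 c2)) :
    ∃ a b c, c ≤ a + b ∧ fill (tri a1 b1 c1 ∪ tri a2 b2 c2) = tri a b c ∧
      (a + b - c) ≤ (a1 + b1 - c1) + (a2 + b2 - c2) + 1 := by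
  set A := tri a1 b1 c1 with hA
  set B := tri a2 b2 c2 with hB
  set U := A ∪ B with hU
  have hF : Filled (fill U) := filled_fill U
  obtain ⟨t, s, htA, hsB, hn⟩ := touch_iff.1 htouch
  have hstar : max a1 a2 + max b1 b2 - min c1 c2 ≤ (a1 + b1 - c1) + (a2 + b2 - c2) + 1 :=
    hull_bound htA hsB hn
  have hstarv : min c1 c2 ≤ max a1 a2 + max b1 b2 := by
    have := min_le_left c1 c2
    have := le_max_left a1 a2
    have := le_max_left b1 b2
    omega
  have hAstar : A ⊆ tri (max a1 a2) (max b1 b2) (min c1 c2) :=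
    (tri_subset_tri h1).2 ⟨le_max_left _ _, le_max_left _ _, min_le_left _ _⟩
  have hBstar : B ⊆ tri (max a1 a2) (max b1 b2) (min c1 c2) :=
    (tri_subset_tri h2).2 ⟨le_max_right _ _, le_max_right _ _, min_le_right _ _⟩
  have hAF : A ⊆ fill U := (Set.subset_union_left).trans (subset_fill U)
  have hBF : B ⊆ fill U := (Set.subset_union_right).trans (subset_fill U)
  -- the main growth loop
  have loop : ∀ n : ℕ, ∀ a b c : ℤ, c ≤ a + b → tri a b c ⊆ fill U → A ⊆ tri a b c →
      s ∈ tri a b c → tri a b c ⊆ tri (max a1 a2) (max b1 b2) (min c1 c2) →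
      (max a1 a2 + max b1 b2 - min c1 c2) - (a + b - c) ≤ (n : ℤ) →
      ∃ a' b' c', c' ≤ a' + b' ∧ tri a' b' c' ⊆ fill U ∧ A ⊆ tri a' b' c' ∧
        B ⊆ tri a' b' c' ∧ tri a' b' c' ⊆ tri (max a1 a2) (max b1 b2) (min c1 c2) := by
    intro n
    induction n with
    | zero =>
      intro a b c hv hsubF hAC hsC hCstar hm
      by_cases hBC : B ⊆ tri a b c
      · exact ⟨a, b, c, hv, hsubF, hAC, hBC, hCstar⟩
      · exfalso
        obtain ⟨e1, e2, e3⟩ := (tri_subset_tri hv).1 hCstar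
        have heq : a = max a1 a2 ∧ b = max b1 b2 ∧ c = min c1 c2 := by
          push_cast at hm; omega
        apply hBC
        intro q hq
        have hq' := hBstar hq
        rw [← heq.1, ← heq.2.1, ← heq.2.2] at hq'
        exact hq'
    | succ n ih =>
      intro a b c hv hsubF hAC hsC hCstar hm
      by_cases hBC : B ⊆ tri a b c
      · exact ⟨a, b, c, hv, hsubF, hAC, hBC, hCstar⟩
      · obtain ⟨q, hqB, hqC⟩ := Set.not_subset.1 hBC
        have hpath : ReflTransGen (Adj B) s q :=
          (tri_connected h2 s hsB).trans
            (by haveI : Std.Symm (Adj B) := ⟨fun _ _ h => adj_symm h⟩; exact Std.Symm.symm _ _ (tri_connected h2 q hqB))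
        obtain ⟨u, w, ⟨huB, hwB, hwn⟩, huC, hwC⟩ := exit_pair hsC hpath hqC
        obtain ⟨a', b', c', hv', hsubF', hsub', hwC', hsz', hba, hbb, hbc⟩ :=
          grow hF hv hsubF (hBF hwB) hwC huC hwn
        obtain ⟨e1, e2, e3⟩ := (tri_subset_tri hv).1 hCstar
        obtain ⟨f1, f2, f3⟩ := hBstar hwB
        have hCstar' : tri a' b' c' ⊆ tri (max a1 a2) (max b1 b2) (min c1 c2) :=
          (tri_subset_tri hv').2 ⟨le_trans hba (max_le e1 f1),
            le_trans hbb (max_le e2 f2), le_trans (le_min e3 f3) hbc⟩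
        exact ih a' b' c' hv' hsubF' (hAC.trans hsub') (hsub' hsC) hCstar'
          (by push_cast at hm ⊢; omega)
  -- initial triangle containing `s`
  have init : ∃ a b c, c ≤ a + b ∧ tri a b c ⊆ fill U ∧ A ⊆ tri a b c ∧
      s ∈ tri a b c ∧ tri a b c ⊆ tri (max a1 a2) (max b1 b2) (min c1 c2) := by
    by_cases hsA : s ∈ A
    · exact ⟨a1, b1, c1, h1, hAF, subset_rfl, hsA, hAstar⟩
    · obtain ⟨a', b', c', hv', hsubF', hsub', hsC', hsz', hba, hbb, hbc⟩ :=
        grow hF h1 hAF (hBF hsB) hsA htA hn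
      obtain ⟨f1, f2, f3⟩ := hBstar hsB
      refine ⟨a', b', c', hv', hsubF', hsub', hsC', ?_⟩
      exact (tri_subset_tri hv').2 ⟨le_trans hba (max_le (le_max_left _ _) f1),
        le_trans hbb (max_le (le_max_left _ _) f2),
        le_trans (le_min (min_le_left _ _) f3) hbc⟩
  obtain ⟨a0, b0, c0, hv0, hsubF0, hA0, hs0, hstar0⟩ := init
  obtain ⟨a, b, c, hv, hsubF, hAC, hBC, hCs⟩ :=
    loop ((max a1 a2 + max b1 b2 - min c1 c2) - (a0 + b0 - c0)).toNat a0 b0 c0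
      hv0 hsubF0 hA0 hs0 hstar0 (by omega)
  have hfillU : fill U = tri a b c :=
    le_antisymm (fill_subset (Set.union_subset hAC hBC) (filled_tri a b c)) hsubF
  obtain ⟨e1, e2, e3⟩ := (tri_subset_tri hv).1 hCs
  exact ⟨a, b, c, hv, hfillU, by omega⟩


/-- Triangle from a parameter triple. -/
def triP (x : ℤ × ℤ × ℤ) : Set Pt := tri x.1 x.2.1 x.2.2

lemma triP_def (x : ℤ × ℤ × ℤ) : triP x = tri x.1 x.2.1 x.2.2 := rfl

/-- Side length of a parameter triple. -/
def sideN (x : ℤ × ℤ × ℤ) : ℕ := (x.1 + x.2.1 - x.2.2).toNat + 1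

/-- Union of a list of triangles. -/
def uL (L : List (ℤ × ℤ × ℤ)) : Set Pt := ⋃ x ∈ L, triP x

lemma uL_nil : uL [] = ∅ := by simp [uL]

lemma uL_cons (x : ℤ × ℤ × ℤ) (L : List (ℤ × ℤ × ℤ)) : uL (x :: L) = triP x ∪ uL L := by
  ext q
  simp only [uL, Set.mem_iUnion, List.mem_cons, Set.mem_union]
  constructor
  · rintro ⟨y, (rfl | hy), hq⟩
    · exact Or.inl hq
    · exact Or.inr ⟨y, hy, hq⟩
  · rintro (hq | ⟨y, hy, hq⟩)
    · exact ⟨x, Or.inl rfl, hq⟩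
    · exact ⟨y, Or.inr hy, hq⟩

lemma uL_erase {x : ℤ × ℤ × ℤ} {L : List (ℤ × ℤ × ℤ)} (hx : x ∈ L) :
    uL L = triP x ∪ uL (L.erase x) := by
  ext q
  simp only [uL, Set.mem_iUnion, Set.mem_union]
  constructor
  · rintro ⟨y, hy, hq⟩
    by_cases hxy : y = x
    · exact Or.inl (hxy ▸ hq)
    · exact Or.inr ⟨y, (List.mem_erase_of_ne hxy).2 hy, hq⟩
  · rintro (hq | ⟨y, hy, hq⟩)
    · exact ⟨x, hx, hq⟩
    · exact ⟨y, List.erase_subset hy, hq⟩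

lemma filled_uL (L : List (ℤ × ℤ × ℤ))
    (hp : List.Pairwise (fun x y => ¬ Touch (triP x) (triP y)) L) : Filled (uL L) := by
  have he : uL L = ⋃₀ (triP '' {x | x ∈ L}) := by
    rw [Set.sUnion_image]; rfl
  rw [he]
  apply filled_sUnion
  · rintro S ⟨x, hx, rfl⟩
    exact filled_tri _ _ _
  · rintro S ⟨x, hx, rfl⟩ T ⟨y, hy, rfl⟩ hne
    have hxy : x ≠ y := fun h => hne (by rw [h])
    have hsym : Symmetric (fun x y : ℤ × ℤ × ℤ => ¬ Touch (triP x) (triP y)) :=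
      fun u v h t => h (touch_comm t)
    exact (haveI : Std.Symm (fun x y : ℤ × ℤ × ℤ => ¬ Touch (triP x) (triP y)) := ⟨fun _ _ h => hsym h⟩; hp.forall hx hy hxy)

lemma sum_map_erase (f : ℤ × ℤ × ℤ → ℕ) :
    ∀ (L : List (ℤ × ℤ × ℤ)) (x : ℤ × ℤ × ℤ), x ∈ L →
      (L.map f).sum = f x + ((L.erase x).map f).sum := by
  intro L
  induction L with
  | nil => intro x hx; cases hx
  | cons y L ih =>
    intro x hx
    by_cases h : y = x
    · subst h; rw [List.erase_cons_head]; simp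
    · have hx' : x ∈ L := by
        rcases List.mem_cons.1 hx with h' | h'
        · exact absurd h'.symm h
        · exact h'
      have he : (y :: L).erase x = y :: L.erase x := by
        simp [List.erase_cons, h]
      rw [he]
      simp only [List.map_cons, List.sum_cons, ih x hx']
      omega

/-- The cascade: absorb a triangle `cur` into a list of pairwise non-touching triangles. -/
lemma cascade : ∀ (n : ℕ) (L : List (ℤ × ℤ × ℤ)), L.length ≤ n →
    (∀ x ∈ L, x.2.2 ≤ x.1 + x.2.1) →
    List.Pairwise (fun x y => ¬ Touch (triP x) (triP y)) L →
    ∀ cur : ℤ × ℤ × ℤ, cur.2.2 ≤ cur.1 + cur.2.1 →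
    ∀ P : Set Pt, fill P = fill (triP cur ∪ uL L) →
    ∃ L' : List (ℤ × ℤ × ℤ), (∀ x ∈ L', x.2.2 ≤ x.1 + x.2.1) ∧
      List.Pairwise (fun x y => ¬ Touch (triP x) (triP y)) L' ∧
      fill P = uL L' ∧ (L'.map sideN).sum ≤ (L.map sideN).sum + sideN cur := by
  intro n
  induction n with
  | zero =>
    intro L hlen hv hp cur hcur P hP
    have hL : L = [] := List.length_eq_zero_iff.1 (Nat.le_zero.1 hlen)
    subst hL
    refine ⟨[cur], ?_, List.pairwise_singleton _ _, ?_, by simp⟩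
    · intro x hx
      rw [List.mem_singleton] at hx
      subst hx; exact hcur
    · rw [hP, uL_nil, Set.union_empty]
      have : uL [cur] = triP cur := by rw [uL_cons, uL_nil, Set.union_empty]
      rw [this]
      exact fill_eq_self (filled_tri _ _ _)
  | succ n ih =>
    intro L hlen hv hp cur hcur P hP
    by_cases htc : ∃ x ∈ L, Touch (triP cur) (triP x)
    · obtain ⟨x, hxL, htouch⟩ := htc
      obtain ⟨a, b, c, hvab, hfillm, hsz⟩ := merge hcur (hv x hxL) htouch
      have hlen'' : (L.erase x).length ≤ n := by
        rw [List.length_erase_of_mem hxL]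
        have h1 : L ≠ [] := List.ne_nil_of_mem hxL
        have h2 := List.length_pos_iff.2 h1
        omega
      have hv'' : ∀ y ∈ L.erase x, y.2.2 ≤ y.1 + y.2.1 :=
        fun y hy => hv y (List.erase_subset hy)
      have hp'' := List.Pairwise.sublist (List.erase_sublist (a := x) (l := L)) hp
      have hP' : fill P = fill (triP (a, b, c) ∪ uL (L.erase x)) := by
        have hacc : triP cur ∪ uL L =
            uL (L.erase x) ∪ (tri cur.1 cur.2.1 cur.2.2 ∪ tri x.1 x.2.1 x.2.2) := by
          rw [uL_erase hxL]
          ext q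
          simp only [Set.mem_union, triP_def]
          tauto
        rw [hP, hacc, ← fill_union_fill_right, hfillm]
        exact congrArg fill (by ext q; simp only [Set.mem_union, triP_def]; tauto)
      obtain ⟨L', hv', hp', hfill', hsum'⟩ :=
        ih (L.erase x) hlen'' hv'' hp'' (a, b, c) hvab P hP'
      refine ⟨L', hv', hp', hfill', ?_⟩
      have hsx := sum_map_erase sideN L x hxL
      have hcx := hv x hxL
      have hcur' : sideN (a, b, c) ≤ sideN cur + sideN x := by
        simp only [sideN]
        omega
      omega
    · push_neg at htc
      refine ⟨cur :: L, ?_, List.Pairwise.cons (fun y hy => htc y hy) hp, ?_, by simp; omega⟩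
      · intro y hy
        rcases List.mem_cons.1 hy with h | h
        · subst h; exact hcur
        · exact hv y h
      · rw [hP, ← uL_cons]
        exact fill_eq_self (filled_uL _ (List.Pairwise.cons (fun y hy => htc y hy) hp))

lemma filled_empty : Filled (∅ : Set Pt) := by
  intro v hv
  simp [Set.empty_inter] at hv

lemma tri_single (p : Pt) : tri p.1 p.2 (p.1 + p.2) = {p} := by
  ext q
  simp only [mem_tri, Set.mem_singleton_iff]
  constructor
  · rintro ⟨h1, h2, h3⟩
    exact pt_ext (by omega) (by omega)
  · rintro rfl
    exact ⟨le_rfl, le_rfl, le_rfl⟩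

/-- Main decomposition, list form. -/
lemma decomp_list (P : Finset Pt) :
    ∃ L : List (ℤ × ℤ × ℤ), (∀ x ∈ L, x.2.2 ≤ x.1 + x.2.1) ∧
      List.Pairwise (fun x y => ¬ Touch (triP x) (triP y)) L ∧
      fill (P : Set Pt) = uL L ∧ (L.map sideN).sum ≤ P.card := by
  classical
  induction P using Finset.induction_on with
  | empty =>
    refine ⟨[], by simp, List.Pairwise.nil, ?_, by simp⟩
    rw [uL_nil, Finset.coe_empty]
    exact fill_eq_self filled_empty
  | @insert p P hpP ih =>
    obtain ⟨L, hv, hp, hfill, hsum⟩ := ih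
    have hstep : fill ((insert p P : Finset Pt) : Set Pt) =
        fill (triP (p.1, p.2, p.1 + p.2) ∪ uL L) := by
      rw [Finset.coe_insert, Set.insert_eq, ← fill_union_fill_right, hfill]
      have h1 : triP (p.1, p.2, p.1 + p.2) = {p} := tri_single p
      rw [h1]
    obtain ⟨L', h1, h2, h3, h4⟩ :=
      cascade L.length L le_rfl hv hp (p.1, p.2, p.1 + p.2) le_rfl
        ((insert p P : Finset Pt) : Set Pt) hstep
    refine ⟨L', h1, h2, h3, ?_⟩
    have hc : sideN (p.1, p.2, p.1 + p.2) = 1 := by simp [sideN]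
    rw [Finset.card_insert_of_notMem hpP]
    omega

end Aux

/-- the fill closure of any finite pattern decomposes into
pairwise non-touching translated triangles with total size at most `|P|`. -/
theorem fill_decomposition (P : Finset Pt) :
    ∃ (r : ℕ) (k : Fin r → ℕ) (v : Fin r → Pt),
      IsDecomp P r k v ∧ ∑ i, k i ≤ P.card := by
  obtain ⟨L, hv, hp, hfill, hsum⟩ := decomp_list P
  have tr_eq : ∀ i : Fin L.length,
      transl (((L.get i).2.2 - (L.get i).2.1, (L.get i).2.2 - (L.get i).1) : Pt)
        (triangle (sideN (L.get i))) = triP (L.get i) := by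
    intro i
    have hmem : L.get i ∈ L := List.mem_iff_get.2 ⟨i, rfl⟩
    have hvx := hv (L.get i) hmem
    rw [triP_def, tri_eq_transl hvx]
    rfl
  refine ⟨L.length, fun i => sideN (L.get i),
    fun i => (((L.get i).2.2 - (L.get i).2.1, (L.get i).2.2 - (L.get i).1) : Pt),
    ⟨?_, ?_, ?_⟩, ?_⟩
  · rw [hfill]
    ext q
    simp only [Set.mem_iUnion, tr_eq, uL]
    constructor
    · rintro ⟨x, hx, hq⟩
      obtain ⟨i, rfl⟩ := List.mem_iff_get.1 hx
      exact ⟨i, hq⟩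
    · rintro ⟨i, hq⟩
      exact ⟨L.get i, List.mem_iff_get.2 ⟨i, rfl⟩, hq⟩
  · intro i
    exact Nat.le_add_left 1 _
  · intro i j hij ht
    rw [List.pairwise_iff_get] at hp
    rw [tr_eq i, tr_eq j] at ht
    rcases lt_or_gt_of_ne hij with h | h
    · exact hp i j h ht
    · exact hp j i h (touch_comm ht)
  · have he : (L.map sideN).sum = ∑ i : Fin L.length, sideN (L.get i) := by
      conv_lhs => rw [← List.ofFn_get L]
      rw [List.map_ofFn, List.sum_ofFn]
      rfl
    show (∑ i : Fin L.length, sideN (L.get i)) ≤ P.card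
    omega
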